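/- Let H_1,...,H_N and G_1,...,G_N be symmetric M×M matrices with ν I ≤ H_k ≤ δ I (0 < ν ≤ δ) and G_k positive semidefinite, and let q_k > 0, 0 ≤ r < 1. Define Ǧ_k := diag(G_k) − G_k. Then | (r/2)·Tr( (Σ_k q_k H_k)⁻¹ Σ_k q_k² Ǧ_k ) | ≤ (r/2)·(Σ_k q_k)⁻¹·(1/ν − 1/δ)·Σ_k q_k² Tr(G_k). -/

import Mathlib

open Matrix

/-- With symmetric H_k satisfying ν I ≤ H_k ≤ δ I (0 < ν ≤ δ),
G_k positive semidefinite, q_k > 0 and 0 ≤ r < 1, and Ǧ_k := diag(G_k) − G_k,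
| (r/2)·Tr( (Σ_k q_k H_k)⁻¹ Σ_k q_k² Ǧ_k ) |
  ≤ (r/2)·(Σ_k q_k)⁻¹·(1/ν − 1/δ)·Σ_k q_k² Tr(G_k). -/
lemma auxSmulPSD {m : ℕ} {c : ℝ} (hc : 0 ≤ c) {A : Matrix (Fin m) (Fin m) ℝ}
    (hA : A.PosSemidef) : (c • A).PosSemidef := by
  refine PosSemidef.of_dotProduct_mulVec_nonneg ?_ fun x => ?_
  · rw [IsHermitian, conjTranspose_smul, hA.1.eq, star_trivial]
  · rw [smul_mulVec, dotProduct_smul, smul_eq_mul]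
    exact mul_nonneg hc (hA.dotProduct_mulVec_nonneg x)

lemma auxSumPSD {m N : ℕ} (f : Fin N → Matrix (Fin m) (Fin m) ℝ)
    (h : ∀ k, (f k).PosSemidef) : (∑ k, f k).PosSemidef :=
  Finset.sum_induction f Matrix.PosSemidef (fun _ _ ha hb => ha.add hb)
    Matrix.PosSemidef.zero (fun k _ => h k)

lemma auxDiagNonneg {m : ℕ} {A : Matrix (Fin m) (Fin m) ℝ} (hA : A.PosSemidef)
    (i : Fin m) : 0 ≤ A i i := by
  simpa using hA.dotProduct_mulVec_nonneg (Pi.single i 1)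

lemma auxKey {m : ℕ} (a b : ℝ) (ha : 0 < a) (hb : 0 < b)
    (S : Matrix (Fin m) (Fin m) ℝ) (hS : S.IsHermitian)
    (h1 : (S - a • 1).PosSemidef) (h2 : (b • 1 - S).PosSemidef)
    (B₁ B₂ : Matrix (Fin m) (Fin m) ℝ) (hB₁ : B₁.PosSemidef) (hB₂ : B₂.PosSemidef)
    (hT : B₁.trace = B₂.trace) :
    |(S⁻¹ * (B₁ - B₂)).trace| ≤ (1/a - 1/b) * B₁.trace := by
  classical
  set U : Matrix (Fin m) (Fin m) ℝ := (hS.eigenvectorUnitary : Matrix (Fin m) (Fin m) ℝ) with hU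
  set μ : Fin m → ℝ := hS.eigenvalues with hμ
  have hUU : star U * U = 1 := Unitary.coe_star_mul_self hS.eigenvectorUnitary
  have hUU' : U * star U = 1 := Unitary.coe_mul_star_self hS.eigenvectorUnitary
  have hspec : S = U * diagonal μ * star U := by
    have := hS.spectral_theorem
    rw [Unitary.conjStarAlgAut_apply] at this
    convert this using 3
    all_goals rfl
  -- norm of columns
  have hnorm : ∀ i, (∑ k, U k i * U k i) = 1 := by
    intro i
    have := congrFun (congrFun hUU i) i
    simpa [Matrix.mul_apply, Matrix.one_apply, Matrix.star_apply] using this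
  -- eigenvalue bounds
  have hvec : ∀ i, S *ᵥ (fun k => U k i) = μ i • (fun k => U k i) := by
    intro i
    have := hS.mulVec_eigenvectorBasis i
    convert this using 2
    all_goals (ext k; exact hS.eigenvectorUnitary_apply k i)
  have hquad : ∀ i, (star (fun k => U k i)) ⬝ᵥ (S *ᵥ (fun k => U k i)) = μ i := by
    intro i
    rw [hvec i, dotProduct_smul]
    simp only [smul_eq_mul, dotProduct, Pi.star_apply, star_trivial]
    rw [hnorm i, mul_one]
  have hnormdot : ∀ i, (star (fun k => U k i)) ⬝ᵥ (fun k => U k i) = 1 := by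
    intro i
    simpa [dotProduct] using hnorm i
  have hμa : ∀ i, a ≤ μ i := by
    intro i
    have h := h1.dotProduct_mulVec_nonneg (fun k => U k i)
    rw [sub_mulVec, dotProduct_sub, hquad i, smul_mulVec, one_mulVec,
      dotProduct_smul, hnormdot i] at h
    simpa using sub_nonneg.mp (by simpa using h)
  have hμb : ∀ i, μ i ≤ b := by
    intro i
    have h := h2.dotProduct_mulVec_nonneg (fun k => U k i)
    rw [sub_mulVec, dotProduct_sub, hquad i, smul_mulVec, one_mulVec,
      dotProduct_smul, hnormdot i] at h
    simpa using sub_nonneg.mp (by simpa using h)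
  have hμpos : ∀ i, 0 < μ i := fun i => lt_of_lt_of_le ha (hμa i)
  -- inverse formula
  have hSinv : S⁻¹ = U * diagonal (fun i => (μ i)⁻¹) * star U := by
    apply inv_eq_right_inv
    rw [hspec]
    calc U * diagonal μ * star U * (U * diagonal (fun i => (μ i)⁻¹) * star U)
        = U * diagonal μ * (star U * U) * diagonal (fun i => (μ i)⁻¹) * star U := by
          simp only [Matrix.mul_assoc]
      _ = U * (diagonal μ * diagonal (fun i => (μ i)⁻¹)) * star U := by
          rw [hUU]; simp only [Matrix.mul_one, Matrix.mul_assoc]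
      _ = 1 := by
          rw [diagonal_mul_diagonal]
          have : (fun i => μ i * (μ i)⁻¹) = fun _ => (1:ℝ) := by
            funext i; exact mul_inv_cancel₀ (hμpos i).ne'
          rw [this, diagonal_one, Matrix.mul_one, hUU']
  -- trace formula
  have htr : ∀ C : Matrix (Fin m) (Fin m) ℝ,
      (S⁻¹ * C).trace = ∑ i, (μ i)⁻¹ * (star U * C * U) i i := by
    intro C
    rw [hSinv]
    have e1 : U * diagonal (fun i => (μ i)⁻¹) * star U * C
        = U * (diagonal (fun i => (μ i)⁻¹) * (star U * C)) := by
      simp only [Matrix.mul_assoc]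
    rw [e1, Matrix.trace_mul_comm, Matrix.mul_assoc]
    rw [Matrix.trace]
    refine Finset.sum_congr rfl fun i _ => ?_
    rw [Matrix.diag]
    rw [Matrix.diagonal_mul]
  set C₁ := star U * B₁ * U with hC₁def
  set C₂ := star U * B₂ * U with hC₂def
  have hC₁ : C₁.PosSemidef := by
    simpa [hC₁def, Matrix.star_eq_conjTranspose] using hB₁.conjTranspose_mul_mul_same U
  have hC₂ : C₂.PosSemidef := by
    simpa [hC₂def, Matrix.star_eq_conjTranspose] using hB₂.conjTranspose_mul_mul_same U
  have ht₁ : ∑ i, C₁ i i = B₁.trace := by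
    have h' : C₁.trace = B₁.trace := by
      rw [hC₁def, Matrix.trace_mul_cycle, hUU', Matrix.one_mul]
    simpa [Matrix.trace, Matrix.diag] using h'
  have ht₂ : ∑ i, C₂ i i = B₂.trace := by
    have h' : C₂.trace = B₂.trace := by
      rw [hC₂def, Matrix.trace_mul_cycle, hUU', Matrix.one_mul]
    simpa [Matrix.trace, Matrix.diag] using h'
  have hsplit : ∀ i, (star U * (B₁ - B₂) * U) i i = C₁ i i - C₂ i i := by
    intro i
    rw [hC₁def, hC₂def]
    simp [Matrix.mul_sub, Matrix.sub_mul, Matrix.sub_apply]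
  have hinva : ∀ i, (μ i)⁻¹ ≤ a⁻¹ := fun i => inv_anti₀ ha (hμa i)
  have hinvb : ∀ i, b⁻¹ ≤ (μ i)⁻¹ := fun i => inv_anti₀ (hμpos i) (hμb i)
  have key₁ : ∑ i, (μ i)⁻¹ * C₁ i i ≤ a⁻¹ * B₁.trace := by
    rw [← ht₁, Finset.mul_sum]
    exact Finset.sum_le_sum fun i _ =>
      mul_le_mul_of_nonneg_right (hinva i) (auxDiagNonneg hC₁ i)
  have key₂ : b⁻¹ * B₂.trace ≤ ∑ i, (μ i)⁻¹ * C₂ i i := by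
    rw [← ht₂, Finset.mul_sum]
    exact Finset.sum_le_sum fun i _ =>
      mul_le_mul_of_nonneg_right (hinvb i) (auxDiagNonneg hC₂ i)
  have key₃ : b⁻¹ * B₁.trace ≤ ∑ i, (μ i)⁻¹ * C₁ i i := by
    rw [← ht₁, Finset.mul_sum]
    exact Finset.sum_le_sum fun i _ =>
      mul_le_mul_of_nonneg_right (hinvb i) (auxDiagNonneg hC₁ i)
  have key₄ : ∑ i, (μ i)⁻¹ * C₂ i i ≤ a⁻¹ * B₂.trace := by
    rw [← ht₂, Finset.mul_sum]
    exact Finset.sum_le_sum fun i _ =>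
      mul_le_mul_of_nonneg_right (hinva i) (auxDiagNonneg hC₂ i)
  rw [htr]
  have hsum : ∑ i, (μ i)⁻¹ * (star U * (B₁ - B₂) * U) i i
      = (∑ i, (μ i)⁻¹ * C₁ i i) - ∑ i, (μ i)⁻¹ * C₂ i i := by
    rw [← Finset.sum_sub_distrib]
    exact Finset.sum_congr rfl fun i _ => by rw [hsplit i, mul_sub]
  rw [← hT] at key₂ key₄
  rw [hsum, abs_le]
  have e : (1/a - 1/b) * B₁.trace = a⁻¹ * B₁.trace - b⁻¹ * B₁.trace := by ring
  rw [e]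
  constructor
  · linarith [key₃, key₄]
  · linarith [key₁, key₂]


theorem stmt13 {M N : ℕ} (ν δ : ℝ) (hν : 0 < ν) (hνδ : ν ≤ δ)
    (q : Fin N → ℝ) (hq : ∀ k, 0 < q k)
    (r : ℝ) (hr0 : 0 ≤ r) (hr1 : r < 1)
    (H G : Fin N → Matrix (Fin M) (Fin M) ℝ)
    (hH : ∀ k, (H k).IsHermitian)
    (hlow : ∀ k, (H k - ν • (1 : Matrix (Fin M) (Fin M) ℝ)).PosSemidef)
    (hup : ∀ k, (δ • (1 : Matrix (Fin M) (Fin M) ℝ) - H k).PosSemidef)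
    (hG : ∀ k, (G k).PosSemidef) :
    |(r / 2) * ((∑ k, q k • H k)⁻¹ *
        (∑ k, (q k ^ 2) • (Matrix.diagonal (fun i => G k i i) - G k))).trace|
      ≤ (r / 2) * (∑ k, q k)⁻¹ * (1 / ν - 1 / δ) *
          ∑ k, q k ^ 2 * (G k).trace := by
  rcases Nat.eq_zero_or_pos N with hN | hN
  · subst hN
    simp
  · have hδ : 0 < δ := lt_of_lt_of_le hν hνδ
    have hne : Nonempty (Fin N) := ⟨⟨0, hN⟩⟩
    have hs : 0 < ∑ k, q k :=
      Finset.sum_pos (fun k _ => hq k) Finset.univ_nonempty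
    set s := ∑ k, q k with hsdef
    have ha : 0 < ν * s := mul_pos hν hs
    have hb : 0 < δ * s := mul_pos hδ hs
    have hSherm : (∑ k, q k • H k).IsHermitian := by
      rw [Matrix.IsHermitian, conjTranspose_sum]
      exact Finset.sum_congr rfl fun k _ => by
        rw [conjTranspose_smul, star_trivial, (hH k).eq]
    have e1 : (∑ k, q k • H k) - (ν * s) • (1 : Matrix (Fin M) (Fin M) ℝ)
        = ∑ k, q k • (H k - ν • (1 : Matrix (Fin M) (Fin M) ℝ)) := by
      simp only [smul_sub, Finset.sum_sub_distrib, smul_smul]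
      congr 1
      rw [← Finset.sum_smul]
      congr 1
      rw [← Finset.sum_mul, mul_comm]
    have e2 : (δ * s) • (1 : Matrix (Fin M) (Fin M) ℝ) - (∑ k, q k • H k)
        = ∑ k, q k • (δ • (1 : Matrix (Fin M) (Fin M) ℝ) - H k) := by
      simp only [smul_sub, Finset.sum_sub_distrib, smul_smul]
      congr 1
      rw [← Finset.sum_smul]
      congr 1
      rw [← Finset.sum_mul, mul_comm]
    have h1 : ((∑ k, q k • H k) - (ν * s) • (1 : Matrix (Fin M) (Fin M) ℝ)).PosSemidef := by
      rw [e1]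
      exact auxSumPSD _ fun k => auxSmulPSD (hq k).le (hlow k)
    have h2 : ((δ * s) • (1 : Matrix (Fin M) (Fin M) ℝ) - (∑ k, q k • H k)).PosSemidef := by
      rw [e2]
      exact auxSumPSD _ fun k => auxSmulPSD (hq k).le (hup k)
    set B₁ : Matrix (Fin M) (Fin M) ℝ :=
      ∑ k, (q k ^ 2) • Matrix.diagonal (fun i => G k i i) with hB₁def
    set B₂ : Matrix (Fin M) (Fin M) ℝ := ∑ k, (q k ^ 2) • G k with hB₂def
    have hB₁ : B₁.PosSemidef :=
      auxSumPSD _ fun k => auxSmulPSD (sq_nonneg _)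
        (Matrix.posSemidef_diagonal_iff.mpr fun i => auxDiagNonneg (hG k) i)
    have hB₂ : B₂.PosSemidef :=
      auxSumPSD _ fun k => auxSmulPSD (sq_nonneg _) (hG k)
    have hB₁tr : B₁.trace = ∑ k, q k ^ 2 * (G k).trace := by
      rw [hB₁def, trace_sum]
      refine Finset.sum_congr rfl fun k _ => ?_
      rw [trace_smul, trace_diagonal, smul_eq_mul]
      congr 1
    have hB₂tr : B₂.trace = ∑ k, q k ^ 2 * (G k).trace := by
      rw [hB₂def, trace_sum]
      refine Finset.sum_congr rfl fun k _ => ?_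
      rw [trace_smul, smul_eq_mul]
    have hT : B₁.trace = B₂.trace := by rw [hB₁tr, hB₂tr]
    have hC : (∑ k, (q k ^ 2) • (Matrix.diagonal (fun i => G k i i) - G k)) = B₁ - B₂ := by
      simp only [smul_sub, Finset.sum_sub_distrib, hB₁def, hB₂def]
    have hkey := auxKey (ν * s) (δ * s) ha hb (∑ k, q k • H k) hSherm h1 h2 B₁ B₂ hB₁ hB₂ hT
    rw [hC]
    rw [abs_mul, abs_of_nonneg (by linarith : (0:ℝ) ≤ r / 2)]
    have hfinal : (r / 2) * ((1 / (ν * s) - 1 / (δ * s)) * B₁.trace)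
        = (r / 2) * s⁻¹ * (1 / ν - 1 / δ) * ∑ k, q k ^ 2 * (G k).trace := by
      rw [hB₁tr]
      have hfrac : 1 / (ν * s) - 1 / (δ * s) = s⁻¹ * (1 / ν - 1 / δ) := by
        field_simp
      rw [hfrac]
      ring
    calc r / 2 * |((∑ k, q k • H k)⁻¹ * (B₁ - B₂)).trace|
        ≤ r / 2 * ((1 / (ν * s) - 1 / (δ * s)) * B₁.trace) :=
          mul_le_mul_of_nonneg_left hkey (by linarith)
      _ = _ := hfinal
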